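/- In the conservative case (q = 1) with b > 2, the conditional second moment U_n = E[T_{2,n}² | 𝒜] = Σ_{m∈{0,1}ⁿ, w∈ℕ₊ⁿ} (b-1)^{n-ς(m)} ∏_{j=0}^{n-1} a²_{w_{j+1}}(w|_j, m|_j) is a nonnegative martingale with respect to the filtration (𝒜_n), where ς(m) is the number of zeros in m. Its mean is 1, i.e. E U_n = 1 for all n. -/

import Mathlib

open MeasureTheory ProbabilityTheory Filter
open scoped ENNReal

/-- Nodes of the tree `⋃ₙ ℕ₊ⁿ × {0,1}ⁿ`. -/
abbrev TreeNode : Type := Σ k : ℕ, (Fin k → ℕ) × (Fin k → Bool)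

/-- The Mandelbrot martingale
`Uₙ = Σ_{|w|=|m|=n} (b-1)^{n-ς(m)} ∏_{j<n} a²_{w_{j+1}}(w|_j, m|_j)` on the tree
`⋃ₙ ℕ₊ⁿ × {0,1}ⁿ`, where `ς(m)` is the number of zeros (`false`s) of `m`, so
`n - ς(m)` is the number of ones (`true`s). -/
noncomputable def Ufun {Ω : Type*} (b : ℝ) (A : TreeNode → Ω → ℕ → ℝ)
    (n : ℕ) (ω : Ω) : ℝ :=
  ∑' p : (Fin n → ℕ) × (Fin n → Bool),
    (b - 1) ^ (Finset.univ.filter (fun j => p.2 j = true)).card *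
      ∏ j : Fin n,
        (A ⟨j.1, fun i => p.1 (Fin.castLE j.isLt.le i),
              fun i => p.2 (Fin.castLE j.isLt.le i)⟩ ω (p.1 j)) ^ 2

/-- The σ-field `𝒜ₙ` generated by the weights at the nodes of generation `< n`. -/
def Afield {Ω : Type*} [MeasurableSpace Ω] (A : TreeNode → Ω → ℕ → ℝ)
    (n : ℕ) : MeasurableSpace Ω :=
  ⨆ (x : TreeNode) (_ : x.1 < n), MeasurableSpace.comap (A x) inferInstance

lemma tsum_nonneg_toReal {ι : Type*} (f : ι → ℝ) (hf : ∀ i, 0 ≤ f i) :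
    ∑' i, f i = (∑' i, ENNReal.ofReal (f i)).toReal := by
  by_cases hs : Summable f
  · rw [← ENNReal.ofReal_tsum_of_nonneg hf hs, ENNReal.toReal_ofReal (tsum_nonneg hf)]
  · rw [tsum_eq_zero_of_not_summable hs]
    by_cases ht : ∑' i, ENNReal.ofReal (f i) = ⊤
    · simp [ht]
    · exfalso
      apply hs
      have := ENNReal.summable_toReal ht
      simpa only [ENNReal.toReal_ofReal (hf _)] using this

noncomputable def Tfun {Ω : Type*} (b : ℝ) (A : TreeNode → Ω → ℕ → ℝ) (n : ℕ)
    (p : (Fin n → ℕ) × (Fin n → Bool)) (ω : Ω) : ℝ≥0∞ :=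
  (ENNReal.ofReal (b - 1)) ^ (Finset.univ.filter (fun j => p.2 j = true)).card *
    ∏ j : Fin n,
      ENNReal.ofReal
        ((A ⟨j.1, fun i => p.1 (Fin.castLE j.isLt.le i),
              fun i => p.2 (Fin.castLE j.isLt.le i)⟩ ω (p.1 j)) ^ 2)

lemma Ufun_eq_toReal {Ω : Type*} (b : ℝ) (hb : 1 ≤ b) (A : TreeNode → Ω → ℕ → ℝ)
    (n : ℕ) (ω : Ω) : Ufun b A n ω = (∑' p, Tfun b A n p ω).toReal := by
  have hb1 : (0:ℝ) ≤ b - 1 := by linarith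
  rw [Ufun, tsum_nonneg_toReal _ (fun p => mul_nonneg (pow_nonneg hb1 _)
    (Finset.prod_nonneg (fun j _ => sq_nonneg _)))]
  congr 1
  apply tsum_congr
  intro p
  rw [Tfun, ENNReal.ofReal_mul (pow_nonneg hb1 _), ENNReal.ofReal_pow hb1,
    ENNReal.ofReal_prod_of_nonneg (fun j _ => sq_nonneg _)]

def pairSnocEquiv (n : ℕ) :
    (((Fin n → ℕ) × (Fin n → Bool)) × (ℕ × Bool)) ≃
      ((Fin (n+1) → ℕ) × (Fin (n+1) → Bool)) where
  toFun := fun z => (Fin.snoc z.1.1 z.2.1, Fin.snoc z.1.2 z.2.2)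
  invFun := fun p => ((Fin.init p.1, Fin.init p.2), (p.1 (Fin.last n), p.2 (Fin.last n)))
  left_inv := by rintro ⟨⟨q, m⟩, ⟨x, k⟩⟩; simp
  right_inv := by rintro ⟨w, m⟩; simp

lemma factor_castSucc {Ω : Type*} (A : TreeNode → Ω → ℕ → ℝ) {n : ℕ}
    (q : Fin n → ℕ) (m : Fin n → Bool) (x : ℕ) (k : Bool) (ω : Ω) (i : Fin n) :
    A ⟨(Fin.castSucc i).1,
        fun l => (Fin.snoc q x : Fin (n+1) → ℕ) (Fin.castLE (Fin.castSucc i).isLt.le l),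
        fun l => (Fin.snoc m k : Fin (n+1) → Bool) (Fin.castLE (Fin.castSucc i).isLt.le l)⟩ ω
        ((Fin.snoc q x : Fin (n+1) → ℕ) (Fin.castSucc i))
      = A ⟨i.1, fun l => q (Fin.castLE i.isLt.le l), fun l => m (Fin.castLE i.isLt.le l)⟩ ω
          (q i) := by
  have e1 : ∀ (l : Fin i.1),
      (Fin.snoc q x : Fin (n+1) → ℕ) (Fin.castLE (Fin.castSucc i).isLt.le l)
        = q (Fin.castLE i.isLt.le l) := fun l => by
    have h : Fin.castLE (Fin.castSucc i).isLt.le l = Fin.castSucc (Fin.castLE i.isLt.le l) := rfl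
    rw [h, Fin.snoc_castSucc]
  have e2 : ∀ (l : Fin i.1),
      (Fin.snoc m k : Fin (n+1) → Bool) (Fin.castLE (Fin.castSucc i).isLt.le l)
        = m (Fin.castLE i.isLt.le l) := fun l => by
    have h : Fin.castLE (Fin.castSucc i).isLt.le l = Fin.castSucc (Fin.castLE i.isLt.le l) := rfl
    rw [h, Fin.snoc_castSucc]
  have hnode : (⟨i.1,
      fun l => (Fin.snoc q x : Fin (n+1) → ℕ) (Fin.castLE (Fin.castSucc i).isLt.le l),
      fun l => (Fin.snoc m k : Fin (n+1) → Bool) (Fin.castLE (Fin.castSucc i).isLt.le l)⟩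
        : TreeNode)
      = ⟨i.1, fun l => q (Fin.castLE i.isLt.le l), fun l => m (Fin.castLE i.isLt.le l)⟩ := by
    exact congrArg (fun pr => (⟨i.1, pr⟩ : TreeNode))
      (Prod.ext (funext e1) (funext e2))
  rw [show ((Fin.snoc q x : Fin (n+1) → ℕ) (Fin.castSucc i)) = q i from Fin.snoc_castSucc ..]
  exact congrFun (congrArg (fun nd => A nd ω) hnode) (q i)

lemma factor_last {Ω : Type*} (A : TreeNode → Ω → ℕ → ℝ) {n : ℕ}
    (q : Fin n → ℕ) (m : Fin n → Bool) (x : ℕ) (k : Bool) (ω : Ω) :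
    A ⟨(Fin.last n).1,
        fun l => (Fin.snoc q x : Fin (n+1) → ℕ) (Fin.castLE (Fin.last n).isLt.le l),
        fun l => (Fin.snoc m k : Fin (n+1) → Bool) (Fin.castLE (Fin.last n).isLt.le l)⟩ ω
        ((Fin.snoc q x : Fin (n+1) → ℕ) (Fin.last n))
      = A ⟨n, q, m⟩ ω x := by
  have e1 : ∀ (l : Fin n),
      (Fin.snoc q x : Fin (n+1) → ℕ) (Fin.castLE (Fin.last n).isLt.le l) = q l := fun l => by
    have h : Fin.castLE (Fin.last n).isLt.le l = Fin.castSucc l := rfl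
    rw [h, Fin.snoc_castSucc]
  have e2 : ∀ (l : Fin n),
      (Fin.snoc m k : Fin (n+1) → Bool) (Fin.castLE (Fin.last n).isLt.le l) = m l := fun l => by
    have h : Fin.castLE (Fin.last n).isLt.le l = Fin.castSucc l := rfl
    rw [h, Fin.snoc_castSucc]
  have hnode : (⟨n,
      fun l => (Fin.snoc q x : Fin (n+1) → ℕ) (Fin.castLE (Fin.last n).isLt.le l),
      fun l => (Fin.snoc m k : Fin (n+1) → Bool) (Fin.castLE (Fin.last n).isLt.le l)⟩
        : TreeNode)
      = ⟨n, q, m⟩ := by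
    exact congrArg (fun pr => (⟨n, pr⟩ : TreeNode)) (Prod.ext (funext e1) (funext e2))
  rw [show ((Fin.snoc q x : Fin (n+1) → ℕ) (Fin.last n)) = x from Fin.snoc_last ..]
  exact congrFun (congrArg (fun nd => A nd ω) hnode) x

lemma Tfun_snoc {Ω : Type*} (b : ℝ) (A : TreeNode → Ω → ℕ → ℝ) (n : ℕ)
    (q : Fin n → ℕ) (m : Fin n → Bool) (x : ℕ) (k : Bool) (ω : Ω) :
    Tfun b A (n+1) (Fin.snoc q x, Fin.snoc m k) ω
      = Tfun b A n (q, m) ω *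
        ((ENNReal.ofReal (b - 1)) ^ (if k then 1 else 0) *
          ENNReal.ofReal ((A ⟨n, q, m⟩ ω x) ^ 2)) := by
  rw [Tfun, Tfun]
  have hcard : (Finset.univ.filter (fun j : Fin (n+1) => (Fin.snoc m k : Fin (n+1) → Bool) j = true)).card
      = (Finset.univ.filter (fun j : Fin n => m j = true)).card + (if k then 1 else 0) := by
    rw [Finset.card_filter, Finset.card_filter, Fin.sum_univ_castSucc]
    simp [Fin.snoc_castSucc, Fin.snoc_last]
  have hprod : (∏ j : Fin (n+1),
      ENNReal.ofReal
        ((A ⟨j.1, fun i => (Fin.snoc q x : Fin (n+1) → ℕ) (Fin.castLE j.isLt.le i),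
              fun i => (Fin.snoc m k : Fin (n+1) → Bool) (Fin.castLE j.isLt.le i)⟩ ω
              ((Fin.snoc q x : Fin (n+1) → ℕ) j)) ^ 2))
      = (∏ j : Fin n,
          ENNReal.ofReal
            ((A ⟨j.1, fun i => q (Fin.castLE j.isLt.le i),
                  fun i => m (Fin.castLE j.isLt.le i)⟩ ω (q j)) ^ 2)) *
        ENNReal.ofReal ((A ⟨n, q, m⟩ ω x) ^ 2) := by
    rw [Fin.prod_univ_castSucc]
    congr 1
    · exact Finset.prod_congr rfl fun i _ =>
        congrArg (fun r => ENNReal.ofReal (r ^ 2)) (factor_castSucc A q m x k ω i)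
    · exact congrArg (fun r => ENNReal.ofReal (r ^ 2)) (factor_last A q m x k ω)
  rw [hcard, hprod, pow_add]
  ring

lemma comap_le_Afield {Ω : Type*} [MeasurableSpace Ω] (A : TreeNode → Ω → ℕ → ℝ)
    {n : ℕ} (x : TreeNode) (hx : x.1 < n) :
    MeasurableSpace.comap (A x) inferInstance ≤ Afield A n :=
  le_iSup₂ (f := fun (x : TreeNode) (_ : x.1 < n) =>
    MeasurableSpace.comap (A x) inferInstance) x hx

lemma Afield_le {Ω : Type*} [MeasurableSpace Ω] (A : TreeNode → Ω → ℕ → ℝ)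
    (hAmeas : ∀ x, Measurable (A x)) (n : ℕ) :
    Afield A n ≤ (inferInstance : MeasurableSpace Ω) :=
  iSup₂_le fun x _ => measurable_iff_comap_le.1 (hAmeas x)

lemma Tfun_measurable_Afield {Ω : Type*} [MeasurableSpace Ω] (b : ℝ)
    (A : TreeNode → Ω → ℕ → ℝ) (hAmeas : ∀ x, Measurable (A x)) (n : ℕ)
    (p : (Fin n → ℕ) × (Fin n → Bool)) :
    Measurable[Afield A n] (Tfun b A n p) := by
  refine Measurable.mul measurable_const ?_
  refine Finset.measurable_prod _ (fun j _ => ?_)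
  set nd : TreeNode := ⟨j.1, fun i => p.1 (Fin.castLE j.isLt.le i),
      fun i => p.2 (Fin.castLE j.isLt.le i)⟩ with hnd
  have h1 : Measurable[Afield A n] (A nd) :=
    (Measurable.of_comap_le le_rfl).mono (comap_le_Afield A nd j.isLt) le_rfl
  exact ENNReal.measurable_ofReal.comp
    (((measurable_pi_apply (p.1 j)).comp h1).pow_const 2)

lemma Tfun_measurable {Ω : Type*} [MeasurableSpace Ω] (b : ℝ)
    (A : TreeNode → Ω → ℕ → ℝ) (hAmeas : ∀ x, Measurable (A x)) (n : ℕ)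
    (p : (Fin n → ℕ) × (Fin n → Bool)) :
    Measurable (Tfun b A n p) :=
  (Tfun_measurable_Afield b A hAmeas n p).mono (Afield_le A hAmeas n) le_rfl

lemma Ufun_measurable_Afield {Ω : Type*} [MeasurableSpace Ω] (b : ℝ) (hb : 1 ≤ b)
    (A : TreeNode → Ω → ℕ → ℝ) (hAmeas : ∀ x, Measurable (A x)) (n : ℕ) :
    Measurable[Afield A n] (Ufun b A n) := by
  have : Ufun b A n = fun ω => (∑' p, Tfun b A n p ω).toReal :=
    funext (Ufun_eq_toReal b hb A n)
  rw [this]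
  exact ENNReal.measurable_toReal.comp
    (Measurable.ennreal_tsum (fun p => Tfun_measurable_Afield b A hAmeas n p))

lemma indep_Afield {Ω : Type*} [MeasureSpace Ω] (A : TreeNode → Ω → ℕ → ℝ)
    (hAmeas : ∀ x, Measurable (A x))
    (hAindep : iIndepFun A ℙ)
    (n : ℕ) (x : TreeNode) (hx : ¬ x.1 < n) :
    Indep (Afield A n) (MeasurableSpace.comap (A x) inferInstance) ℙ := by
  have h := indep_biSup_compl (fun y => measurable_iff_comap_le.1 (hAmeas y)) hAindep
    {y : TreeNode | y.1 < n}
  exact indep_of_indep_of_le_right h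
    (le_iSup₂ (f := fun (y : TreeNode) (_ : y ∈ {y : TreeNode | y.1 < n}ᶜ) =>
      MeasurableSpace.comap (A y) inferInstance) x hx)

lemma Csum {Ω : Type*} [MeasureSpace Ω] [IsProbabilityMeasure (ℙ : Measure Ω)]
    (b : ℝ) (aseq : Ω → ℕ → ℝ) (hameas : Measurable aseq) (hann : ∀ ω j, 0 ≤ aseq ω j)
    (hacons : ∀ᵐ ω ∂ℙ, ∑' j, aseq ω j = 1)
    (ha2 : ∫ ω, ∑' j, (aseq ω j) ^ 2 = 1 / b) :
    ∑' x : ℕ, ∫⁻ ω, ENNReal.ofReal ((aseq ω x) ^ 2) ∂ℙ = ENNReal.ofReal (1 / b) := by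
  have hmx : ∀ x : ℕ, Measurable (fun ω => ENNReal.ofReal ((aseq ω x) ^ 2)) := fun x =>
    ENNReal.measurable_ofReal.comp (((measurable_pi_apply x).comp hameas).pow_const 2)
  rw [← lintegral_tsum (fun x => (hmx x).aemeasurable)]
  have key : ∀ᵐ ω ∂ℙ, (∑' x, ENNReal.ofReal ((aseq ω x) ^ 2))
      = ENNReal.ofReal (∑' x, (aseq ω x) ^ 2) ∧ (∑' x, (aseq ω x) ^ 2) ≤ 1 := by
    filter_upwards [hacons] with ω hω
    have hsum : Summable (fun j => aseq ω j) := by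
      by_contra hns
      rw [tsum_eq_zero_of_not_summable hns] at hω
      norm_num at hω
    have hle1 : ∀ j, aseq ω j ≤ 1 := fun j =>
      hω ▸ Summable.le_tsum hsum j (fun k _ => hann ω k)
    have hsq : Summable (fun j => (aseq ω j) ^ 2) :=
      Summable.of_nonneg_of_le (fun j => sq_nonneg _)
        (fun j => by nlinarith [hann ω j, hle1 j]) hsum
    refine ⟨(ENNReal.ofReal_tsum_of_nonneg (fun j => sq_nonneg _) hsq).symm, ?_⟩
    calc ∑' x, (aseq ω x) ^ 2 ≤ ∑' x, aseq ω x :=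
          Summable.tsum_le_tsum (fun j => by nlinarith [hann ω j, hle1 j]) hsq hsum
      _ = 1 := hω
  have h1 : ∫⁻ ω, (∑' x, ENNReal.ofReal ((aseq ω x) ^ 2)) ∂ℙ
      = ∫⁻ ω, ENNReal.ofReal (∑' x, (aseq ω x) ^ 2) ∂ℙ :=
    lintegral_congr_ae (key.mono fun ω h => h.1)
  rw [h1]
  have hgmeas : Measurable (fun ω => ∑' x, (aseq ω x) ^ 2) := by
    have : (fun ω => ∑' x, (aseq ω x) ^ 2)
        = fun ω => (∑' x, ENNReal.ofReal ((aseq ω x) ^ 2)).toReal :=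
      funext fun ω => tsum_nonneg_toReal _ (fun x => sq_nonneg _)
    rw [this]
    exact ENNReal.measurable_toReal.comp (Measurable.ennreal_tsum hmx)
  have hgint : Integrable (fun ω => ∑' x, (aseq ω x) ^ 2) ℙ := by
    refine Integrable.mono' (integrable_const 1) hgmeas.aestronglyMeasurable ?_
    filter_upwards [key] with ω h
    rw [Real.norm_of_nonneg (tsum_nonneg fun x => sq_nonneg _)]
    exact h.2
  rw [← ofReal_integral_eq_lintegral_ofReal hgint
    (Eventually.of_forall fun ω => tsum_nonneg fun x => sq_nonneg _), ha2]

lemma Ustep {Ω : Type*} [MeasureSpace Ω] [IsProbabilityMeasure (ℙ : Measure Ω)]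
    (b : ℝ) (hb : 2 < b)
    (aseq : Ω → ℕ → ℝ) (hameas : Measurable aseq) (hann : ∀ ω j, 0 ≤ aseq ω j)
    (hacons : ∀ᵐ ω ∂ℙ, ∑' j, aseq ω j = 1)
    (ha2 : ∫ ω, ∑' j, (aseq ω j) ^ 2 = 1 / b)
    (A : TreeNode → Ω → ℕ → ℝ)
    (hAmeas : ∀ x, Measurable (A x))
    (hAcopy : ∀ x, IdentDistrib (A x) aseq ℙ ℙ)
    (hAindep : iIndepFun A ℙ)
    (n : ℕ) (s : Set Ω) (hs : MeasurableSet[Afield A n] s) :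
    ∫⁻ ω in s, (∑' p, Tfun b A (n+1) p ω) ∂ℙ = ∫⁻ ω in s, (∑' p, Tfun b A n p ω) ∂ℙ := by
  have hsm : MeasurableSet s := Afield_le A hAmeas n s hs
  have hb1 : (0:ℝ) ≤ b - 1 := by linarith
  -- the per-node second moment
  set C : ℕ → ℝ≥0∞ := fun x => ∫⁻ ω, ENNReal.ofReal ((aseq ω x) ^ 2) ∂ℙ with hC
  -- key factorization
  have hfact : ∀ (q : (Fin n → ℕ) × (Fin n → Bool)) (x : ℕ) (k : Bool),
      ∫⁻ ω in s, (Tfun b A n q ω *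
          ((ENNReal.ofReal (b - 1)) ^ (if k then 1 else 0) *
            ENNReal.ofReal ((A ⟨n, q.1, q.2⟩ ω x) ^ 2))) ∂ℙ
        = (∫⁻ ω in s, Tfun b A n q ω ∂ℙ) *
            ((ENNReal.ofReal (b - 1)) ^ (if k then 1 else 0) * C x) := by
    intro q x k
    set nd : TreeNode := ⟨n, q.1, q.2⟩ with hnd
    have hndlt : ¬ nd.1 < n := by simp [hnd]
    have hindep := indep_Afield A hAmeas hAindep n nd hndlt
    have hnd0 : Measurable[MeasurableSpace.comap (A nd) inferInstance] (A nd) :=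
      Measurable.of_comap_le le_rfl
    have hg : Measurable[MeasurableSpace.comap (A nd) inferInstance]
        (fun ω => (ENNReal.ofReal (b - 1)) ^ (if k then 1 else 0) *
          ENNReal.ofReal ((A nd ω x) ^ 2)) :=
      measurable_const.mul
        (ENNReal.measurable_ofReal.comp (((measurable_pi_apply x).comp hnd0).pow_const 2))
    have hf : Measurable[Afield A n] (s.indicator (Tfun b A n q)) :=
      (Tfun_measurable_Afield b A hAmeas n q).indicator hs
    have hmain := lintegral_mul_eq_lintegral_mul_lintegral_of_independent_measurableSpace
      (Afield_le A hAmeas n) (measurable_iff_comap_le.1 (hAmeas nd)) hindep hf hg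
    have hrw1 : ∫⁻ ω in s, (Tfun b A n q ω *
        ((ENNReal.ofReal (b - 1)) ^ (if k then 1 else 0) *
          ENNReal.ofReal ((A nd ω x) ^ 2))) ∂ℙ
        = ∫⁻ ω, s.indicator (Tfun b A n q) ω *
            ((ENNReal.ofReal (b - 1)) ^ (if k then 1 else 0) *
              ENNReal.ofReal ((A nd ω x) ^ 2)) ∂ℙ := by
      rw [← lintegral_indicator hsm]
      congr 1
      funext ω
      exact Set.indicator_mul_left s _ _
    have hrw2 : ∫⁻ ω, s.indicator (Tfun b A n q) ω ∂ℙ = ∫⁻ ω in s, Tfun b A n q ω ∂ℙ :=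
      lintegral_indicator hsm _
    have hid : ∫⁻ ω, ENNReal.ofReal ((A nd ω x) ^ 2) ∂ℙ = C x := by
      have : IdentDistrib (fun ω => ENNReal.ofReal ((A nd ω x) ^ 2))
          (fun ω => ENNReal.ofReal ((aseq ω x) ^ 2)) ℙ ℙ :=
        (hAcopy nd).comp
          (ENNReal.measurable_ofReal.comp ((measurable_pi_apply x).pow_const 2))
      exact this.lintegral_eq
    have hconst : ∫⁻ ω, (ENNReal.ofReal (b - 1)) ^ (if k then 1 else 0) *
        ENNReal.ofReal ((A nd ω x) ^ 2) ∂ℙ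
        = (ENNReal.ofReal (b - 1)) ^ (if k then 1 else 0) * C x := by
      rw [lintegral_const_mul' ((ENNReal.ofReal (b - 1)) ^ (if k then 1 else 0)) _
        (ENNReal.pow_ne_top ENNReal.ofReal_ne_top), hid]
    rw [hrw1, hmain, hrw2, hconst]
  -- the inner normalization
  have hkey : ∑' z : ℕ × Bool,
      (ENNReal.ofReal (b - 1)) ^ (if z.2 then 1 else 0) * C z.1 = 1 := by
    rw [ENNReal.tsum_prod']
    have hx : ∀ x : ℕ, ∑' k : Bool, (ENNReal.ofReal (b - 1)) ^ (if k then 1 else 0) * C x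
        = ENNReal.ofReal b * C x := by
      intro x
      rw [tsum_fintype]
      have : (1 + ENNReal.ofReal (b - 1)) = ENNReal.ofReal b := by
        rw [← ENNReal.ofReal_one, ← ENNReal.ofReal_add (by norm_num) hb1]
        norm_num
      simp [Fintype.sum_bool, ← this]
      ring
    rw [tsum_congr hx, ENNReal.tsum_mul_left,
      Csum b aseq hameas hann hacons ha2, ← ENNReal.ofReal_mul (by linarith)]
    rw [mul_one_div_cancel (by linarith : b ≠ 0), ENNReal.ofReal_one]
  have hTmeas' : ∀ (m : ℕ) (p : (Fin m → ℕ) × (Fin m → Bool)), Measurable (Tfun b A m p) :=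
    fun m p => Tfun_measurable b A hAmeas m p
  rw [lintegral_tsum (fun p => (hTmeas' (n+1) p).aemeasurable),
    lintegral_tsum (fun p => (hTmeas' n p).aemeasurable)]
  rw [← Equiv.tsum_eq (pairSnocEquiv n) (fun p => ∫⁻ ω in s, Tfun b A (n+1) p ω ∂ℙ)]
  rw [ENNReal.tsum_prod']
  refine tsum_congr fun q => ?_
  have hz : ∀ z : ℕ × Bool,
      ∫⁻ ω in s, Tfun b A (n+1) ((pairSnocEquiv n) (q, z)) ω ∂ℙ
        = (∫⁻ ω in s, Tfun b A n q ω ∂ℙ) *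
            ((ENNReal.ofReal (b - 1)) ^ (if z.2 then 1 else 0) * C z.1) := by
    intro z
    calc ∫⁻ ω in s, Tfun b A (n+1) ((pairSnocEquiv n) (q, z)) ω ∂ℙ
        = ∫⁻ ω in s, (Tfun b A n q ω *
            ((ENNReal.ofReal (b - 1)) ^ (if z.2 then 1 else 0) *
              ENNReal.ofReal ((A ⟨n, q.1, q.2⟩ ω z.1) ^ 2))) ∂ℙ := by
          apply lintegral_congr
          intro ω
          exact Tfun_snoc b A n q.1 q.2 z.1 z.2 ω
      _ = (∫⁻ ω in s, Tfun b A n q ω ∂ℙ) *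
            ((ENNReal.ofReal (b - 1)) ^ (if z.2 then 1 else 0) * C z.1) := hfact q z.1 z.2
  rw [tsum_congr hz, ENNReal.tsum_mul_left, hkey, mul_one]

lemma Umean {Ω : Type*} [MeasureSpace Ω] [IsProbabilityMeasure (ℙ : Measure Ω)]
    (b : ℝ) (hb : 2 < b)
    (aseq : Ω → ℕ → ℝ) (hameas : Measurable aseq) (hann : ∀ ω j, 0 ≤ aseq ω j)
    (hacons : ∀ᵐ ω ∂ℙ, ∑' j, aseq ω j = 1)
    (ha2 : ∫ ω, ∑' j, (aseq ω j) ^ 2 = 1 / b)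
    (A : TreeNode → Ω → ℕ → ℝ)
    (hAmeas : ∀ x, Measurable (A x))
    (hAcopy : ∀ x, IdentDistrib (A x) aseq ℙ ℙ)
    (hAindep : iIndepFun A ℙ)
    (n : ℕ) :
    ∫⁻ ω, (∑' p, Tfun b A n p ω) ∂ℙ = 1 := by
  induction n with
  | zero =>
    have h0 : ∀ ω : Ω, (∑' p : (Fin 0 → ℕ) × (Fin 0 → Bool), Tfun b A 0 p ω) = 1 := by
      intro ω
      rw [tsum_eq_single (default : (Fin 0 → ℕ) × (Fin 0 → Bool))
        (fun p hp => absurd (Subsingleton.elim p default) hp)]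
      simp [Tfun]
    rw [lintegral_congr h0, lintegral_one, measure_univ]
  | succ n ih =>
    rw [← setLIntegral_univ, Ustep b hb aseq hameas hann hacons ha2 A hAmeas hAcopy hAindep n
      Set.univ MeasurableSet.univ, setLIntegral_univ, ih]

/-- In the conservative case (`Σ a_j = 1` a.s., `E Σ a_j² = 1/b`, `b > 2`), with
i.i.d. copies `a(w,m)` of `a` indexed by the nodes of the tree, the process
`(Uₙ)` is a nonnegative martingale for the filtration `(𝒜ₙ)` with mean 1. -/
theorem stmt17 {Ω : Type*} [MeasureSpace Ω] [IsProbabilityMeasure (ℙ : Measure Ω)]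
    (b : ℝ) (hb : 2 < b)
    (aseq : Ω → ℕ → ℝ) (hameas : Measurable aseq) (hann : ∀ ω j, 0 ≤ aseq ω j)
    (hacons : ∀ᵐ ω ∂ℙ, ∑' j, aseq ω j = 1)
    (ha2 : ∫ ω, ∑' j, (aseq ω j) ^ 2 = 1 / b)
    (A : TreeNode → Ω → ℕ → ℝ)
    (hAmeas : ∀ x, Measurable (A x))
    (hAcopy : ∀ x, IdentDistrib (A x) aseq ℙ ℙ)
    (hAindep : iIndepFun A ℙ) :
    (∀ n ω, 0 ≤ Ufun b A n ω)
    ∧ (∀ n, Integrable (Ufun b A n) ℙ)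
    ∧ (∀ n, ∫ ω, Ufun b A n ω = 1)
    ∧ (∀ n, Measurable[Afield A n] (Ufun b A n))
    ∧ (∀ n, (ℙ[Ufun b A (n + 1)|Afield A n]) =ᵐ[ℙ] Ufun b A n) := by
  have hb1 : (1:ℝ) ≤ b := by linarith
  have hble : ∀ n, Afield A n ≤ (inferInstance : MeasurableSpace Ω) :=
    fun n => Afield_le A hAmeas n
  have hnn : ∀ n (ω : Ω), 0 ≤ Ufun b A n ω := fun n ω =>
    tsum_nonneg fun p => mul_nonneg (pow_nonneg (by linarith) _)
      (Finset.prod_nonneg fun j _ => sq_nonneg _)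
  have hfin : ∀ n, ∀ᵐ ω ∂ℙ, (∑' p, Tfun b A n p ω) ≠ ⊤ := fun n => by
    have h := ae_lt_top (Measurable.ennreal_tsum (fun p => Tfun_measurable b A hAmeas n p))
      (by rw [Umean b hb aseq hameas hann hacons ha2 A hAmeas hAcopy hAindep n]
          exact ENNReal.one_ne_top)
    exact h.mono fun ω hω => hω.ne
  have hofReal : ∀ n, ∀ᵐ ω ∂ℙ, ENNReal.ofReal (Ufun b A n ω) = ∑' p, Tfun b A n p ω :=
    fun n => (hfin n).mono fun ω h => by
      rw [Ufun_eq_toReal b hb1 A n ω, ENNReal.ofReal_toReal h]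
  have hmeasA : ∀ n, Measurable[Afield A n] (Ufun b A n) :=
    fun n => Ufun_measurable_Afield b hb1 A hAmeas n
  have hmeas : ∀ n, Measurable (Ufun b A n) := fun n => (hmeasA n).mono (hble n) le_rfl
  have hint : ∀ n, Integrable (Ufun b A n) ℙ := by
    intro n
    refine ⟨(hmeas n).aestronglyMeasurable, ?_⟩
    rw [hasFiniteIntegral_iff_ofReal (Eventually.of_forall (hnn n))]
    rw [lintegral_congr_ae (hofReal n),
      Umean b hb aseq hameas hann hacons ha2 A hAmeas hAcopy hAindep n]
    exact ENNReal.one_lt_top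
  refine ⟨hnn, hint, ?_, hmeasA, ?_⟩
  · intro n
    rw [integral_eq_lintegral_of_nonneg_ae (Eventually.of_forall (hnn n))
      (hmeas n).aestronglyMeasurable]
    rw [lintegral_congr_ae (hofReal n),
      Umean b hb aseq hameas hann hacons ha2 A hAmeas hAcopy hAindep n]
    simp
  · intro n
    refine (ae_eq_condExp_of_forall_setIntegral_eq (hble n) (hint (n+1))
      (fun s _ _ => (hint n).integrableOn) (fun s hs _ => ?_)
      ((hmeasA n).stronglyMeasurable.aestronglyMeasurable)).symm
    rw [integral_eq_lintegral_of_nonneg_ae (Eventually.of_forall (hnn n))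
        (hmeas n).aestronglyMeasurable.restrict,
      integral_eq_lintegral_of_nonneg_ae (Eventually.of_forall (hnn (n+1)))
        (hmeas (n+1)).aestronglyMeasurable.restrict]
    congr 1
    rw [lintegral_congr_ae (ae_restrict_of_ae (hofReal n)),
      lintegral_congr_ae (ae_restrict_of_ae (hofReal (n+1)))]
    exact (Ustep b hb aseq hameas hann hacons ha2 A hAmeas hAcopy hAindep n s hs).symm
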